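/- For every connected simple graph G with at least two vertices, the corona G ∘ K_1 satisfies th_-(G ∘ K_1) = 2. -/
import Mathlib


open SimpleGraph

/-- One round of skew zero forcing: every vertex (blue or white) with exactly one
white neighbor colors that neighbor blue. -/
def skewStep {V : Type*} (G : SimpleGraph V) (B : Set V) : Set V :=
  B ∪ {w | ∃ v, G.Adj v w ∧ ∀ u, G.Adj v u → u ∉ B → u = w}

/-- The set of blue vertices after `n` rounds of skew zero forcing starting from `S`. -/
def skewIter {V : Type*} (G : SimpleGraph V) (S : Set V) : ℕ → Set V
  | 0 => S
  | n + 1 => skewStep G (skewIter G S n)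

/-- `S` is a skew zero forcing set of `G`. -/
def IsSkewZFS {V : Type*} (G : SimpleGraph V) (S : Set V) : Prop :=
  ∃ n, skewIter G S n = Set.univ

/-- The skew propagation time `pt₋(G;S)`: the number of rounds needed for all
vertices to become blue. -/
noncomputable def skewPt {V : Type*} (G : SimpleGraph V) (S : Set V) : ℕ :=
  sInf {n | skewIter G S n = Set.univ}

/-- The skew throttling number `th₋(G)`. -/
noncomputable def skewTh {V : Type*} (G : SimpleGraph V) : ℕ :=
  sInf {m | ∃ S : Set V, IsSkewZFS G S ∧ m = S.ncard + skewPt G S}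

/-- The skew throttling number over sets of size `k`, `th₋(G,k)`. -/
noncomputable def skewThK {V : Type*} (G : SimpleGraph V) (k : ℕ) : ℕ :=
  sInf {m | ∃ S : Set V, IsSkewZFS G S ∧ S.ncard = k ∧ m = S.ncard + skewPt G S}

/-- The skew zero forcing number `Z₋(G)`. -/
noncomputable def skewZ {V : Type*} (G : SimpleGraph V) : ℕ :=
  sInf {m | ∃ S : Set V, IsSkewZFS G S ∧ m = S.ncard}

/-- The skew propagation time `pt₋(G)`: minimum propagation time over minimum
skew zero forcing sets. -/
noncomputable def skewPtMin {V : Type*} (G : SimpleGraph V) : ℕ :=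
  sInf {m | ∃ S : Set V, IsSkewZFS G S ∧ S.ncard = skewZ G ∧ m = skewPt G S}

/-- `rK₂`: the disjoint union of `r` copies of `K₂`. -/
def rK2 (r : ℕ) : SimpleGraph (Fin r × Fin 2) :=
  SimpleGraph.fromRel (fun a b => a.1 = b.1)

/-- Disjoint union of two simple graphs. -/
def disjUnion {α β : Type*} (G : SimpleGraph α) (H : SimpleGraph β) :
    SimpleGraph (α ⊕ β) :=
  SimpleGraph.fromRel (fun x y =>
    match x, y with
    | Sum.inl a, Sum.inl b => G.Adj a b
    | Sum.inr a, Sum.inr b => H.Adj a b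
    | _, _ => False)

/-- The corona `G ∘ K₁`: attach a pendant leaf to every vertex of `G`. -/
def coronaK1 {α : Type*} (G : SimpleGraph α) : SimpleGraph (α ⊕ α) :=
  SimpleGraph.fromRel (fun x y =>
    match x, y with
    | Sum.inl a, Sum.inl b => G.Adj a b
    | Sum.inl a, Sum.inr b => a = b
    | _, _ => False)

/-- The corona `G ∘ K₂`: attach a private copy of `K₂` (a triangle) to every
vertex of `G`. -/
def coronaK2 {α : Type*} (G : SimpleGraph α) : SimpleGraph (α ⊕ α × Fin 2) :=
  SimpleGraph.fromRel (fun x y =>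
    match x, y with
    | Sum.inl a, Sum.inl b => G.Adj a b
    | Sum.inl a, Sum.inr b => a = b.1
    | Sum.inr a, Sum.inr b => a.1 = b.1
    | _, _ => False)

/-- The graph `H(s,t)` with hub `b`, pendant paths `b xᵢ yᵢ` and triangles `b zᵢ wᵢ`. -/
def Hgraph (s t : ℕ) : SimpleGraph (Unit ⊕ ((Fin s × Fin 2) ⊕ (Fin t × Fin 2))) :=
  SimpleGraph.fromRel (fun x y =>
    match x, y with
    | Sum.inl _, Sum.inr (Sum.inl p) => p.2 = 0
    | Sum.inl _, Sum.inr (Sum.inr _) => True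
    | Sum.inr (Sum.inl p), Sum.inr (Sum.inl q) => p.1 = q.1
    | Sum.inr (Sum.inr p), Sum.inr (Sum.inr q) => p.1 = q.1
    | _, _ => False)

/-- The friendship graph `Fₙ`: a universal vertex joined to `n` disjoint copies of `K₂`. -/
def friendshipGraph (n : ℕ) : SimpleGraph (Unit ⊕ (Fin n × Fin 2)) :=
  SimpleGraph.fromRel (fun x y =>
    match x, y with
    | Sum.inl _, Sum.inr _ => True
    | Sum.inr p, Sum.inr q => p.1 = q.1
    | _, _ => False)

/-- The balanced spider `T_{p,ℓ}`: a center with `p` legs of `ℓ` vertices each. -/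
def spider (p ℓ : ℕ) : SimpleGraph (Unit ⊕ (Fin p × Fin ℓ)) :=
  SimpleGraph.fromRel (fun x y =>
    match x, y with
    | Sum.inl _, Sum.inr q => q.2.val = 0
    | Sum.inr q, Sum.inr q' => q.1 = q'.1 ∧ q'.2.val = q.2.val + 1
    | _, _ => False)

/-- The hypercube graph `Qₙ`: binary strings of length `n`, adjacent iff they
differ in exactly one coordinate. -/
def hypercube (n : ℕ) : SimpleGraph (Fin n → Bool) :=
  SimpleGraph.fromRel (fun x y => ∃! i, x i ≠ y i)
lemma coronaK1_adj_inr {α : Type*} (G : SimpleGraph α) (a : α) (y : α ⊕ α) :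
    (coronaK1 G).Adj (Sum.inr a) y ↔ y = Sum.inl a := by
  rcases y with b | b <;> simp [coronaK1, eq_comm]

lemma coronaK1_adj_inl_inl {α : Type*} (G : SimpleGraph α) (a b : α) :
    (coronaK1 G).Adj (Sum.inl a) (Sum.inl b) ↔ G.Adj a b := by
  constructor
  · intro h; simp [coronaK1] at h
    rcases h.2 with h' | h'
    · exact h'
    · exact h'.symm
  · intro h; simp [coronaK1, h, h.ne]

lemma coronaK1_adj_inl_inr {α : Type*} (G : SimpleGraph α) (a b : α) :
    (coronaK1 G).Adj (Sum.inl a) (Sum.inr b) ↔ a = b := by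
  simp [coronaK1]

lemma exists_adj_of_connected {V : Type*} [Fintype V] (G : SimpleGraph V)
    (hc : G.Connected) (h2 : 2 ≤ Fintype.card V) (a : V) : ∃ b, G.Adj a b := by
  obtain ⟨b, hb⟩ := Fintype.exists_ne_of_one_lt_card (by omega) a
  obtain ⟨w⟩ := hc.preconnected a b
  cases w with
  | nil => exact absurd rfl hb.symm
  | cons h _ => exact ⟨_, h⟩

/-- for a connected graph `G` with at least two vertices,
`th₋(G ∘ K₁) = 2`. -/
theorem skewTh_coronaK1 {V : Type*} [Fintype V] (G : SimpleGraph V)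
    (hc : G.Connected) (h2 : 2 ≤ Fintype.card V) :
    skewTh (coronaK1 G) = 2 := by
  have hV : Nonempty V := Fintype.card_pos_iff.mp (by omega)
  obtain ⟨a0⟩ := hV
  set G' := coronaK1 G with hG'
  -- every original vertex gets forced in one round (by its leaf)
  have h1 : ∀ a : V, Sum.inl a ∈ skewIter G' ∅ 1 := by
    intro a
    refine Or.inr ⟨Sum.inr a, (coronaK1_adj_inr G a _).mpr rfl, ?_⟩
    intro u hu _
    exact (coronaK1_adj_inr G a u).mp hu
  -- no leaf gets forced in the first round from the empty set
  have hnot : ∀ a : V, Sum.inr a ∉ skewIter G' ∅ 1 := by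
    intro a h
    rcases h with h | ⟨v, hv, hall⟩
    · exact h
    · -- v must be Sum.inl a
      rcases v with c | c
      · have hca : c = a := (coronaK1_adj_inl_inr G c a).mp hv
        subst hca
        obtain ⟨b, hb⟩ := exists_adj_of_connected G hc h2 c
        have : Sum.inl b = Sum.inr c :=
          hall (Sum.inl b) ((coronaK1_adj_inl_inl G c b).mpr hb) (fun h => h)
        exact absurd this (by simp)
      · have := (coronaK1_adj_inr G c _).mp hv
        exact absurd this (by simp)
  -- after two rounds everything is blue
  have h2univ : skewIter G' ∅ 2 = Set.univ := by
    ext x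
    simp only [Set.mem_univ, iff_true]
    rcases x with a | a
    · exact Or.inl (h1 a)
    · refine Or.inr ⟨Sum.inl a, (coronaK1_adj_inl_inr G a a).mpr rfl, ?_⟩
      intro u hu hu1
      rcases u with b | b
      · exact absurd (h1 b) hu1
      · have : a = b := (coronaK1_adj_inl_inr G a b).mp hu
        exact this ▸ rfl
  have hZFS : IsSkewZFS G' (∅ : Set (V ⊕ V)) := ⟨2, h2univ⟩
  have hpt : skewPt G' (∅ : Set (V ⊕ V)) = 2 := by
    refine le_antisymm (Nat.sInf_le h2univ) ?_
    refine le_csInf ⟨2, h2univ⟩ ?_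
    intro n hn
    by_contra hlt
    push_neg at hlt
    interval_cases n
    · have hn' : (∅ : Set (V ⊕ V)) = Set.univ := hn
      exact (hn' ▸ Set.mem_univ (Sum.inl a0) : Sum.inl a0 ∈ (∅ : Set (V ⊕ V)))
    · exact hnot a0 (hn ▸ Set.mem_univ _)
  have hmem : 2 ∈ {m | ∃ S : Set (V ⊕ V), IsSkewZFS G' S ∧ m = S.ncard + skewPt G' S} :=
    ⟨∅, hZFS, by simp [hpt]⟩
  refine le_antisymm (Nat.sInf_le hmem) ?_
  refine le_csInf ⟨2, hmem⟩ ?_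
  rintro m ⟨S, hS, rfl⟩
  by_contra hlt
  push_neg at hlt
  have hptmem : skewIter G' S (skewPt G' S) = Set.univ := Nat.sInf_mem hS
  have hcard : 2 ≤ (Set.univ : Set (V ⊕ V)).ncard := by
    rw [Set.ncard_univ, Nat.card_eq_fintype_card]
    simp only [Fintype.card_sum]
    omega
  have h2c : S.ncard + skewPt G' S = 0 ∨ S.ncard + skewPt G' S = 1 := by omega
  rcases h2c with h | h
  · -- ncard S = 0 and skewPt = 0
    have hpt0 : skewPt G' S = 0 := by omega
    have hS0 : S.ncard = 0 := by omega
    rw [hpt0] at hptmem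
    have : S = Set.univ := hptmem
    rw [this] at hS0
    omega
  · rcases Nat.add_eq_one_iff.mp h with ⟨hS0, hpt1⟩ | ⟨hS1, hpt0⟩
    · -- S = ∅, skewPt = 1
      have hSe : S = ∅ := (Set.ncard_eq_zero S.toFinite).mp hS0
      rw [hpt1, hSe] at hptmem
      exact hnot a0 (hptmem ▸ Set.mem_univ _)
    · rw [hpt0] at hptmem
      have : S = Set.univ := hptmem
      rw [this] at hS1
      omega
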